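/- The set of Misiurewicz combinatorics Cb_mis — tuples Θ = (θ_1,…,θ_{d−1}) ∈ Cb such that every angle α ∈ ∪θ_i is strictly preperiodic under multiplication by d on ℝ/ℤ — is dense in Cb. -/

import Mathlib

/-- The circle `ℝ/ℤ`. -/
abbrev Circle1 := AddCircle (1 : ℝ)

/-- `B` is unlinked from `A`: `B` is contained in a single connected component of the
complement of `A`. -/
def UnlinkedIn (A B : Set Circle1) : Prop :=
  ∃ x ∈ B, B ⊆ connectedComponentIn Aᶜ x

/-- Ambient space for critical portraits: `(d−1)`-tuples of subsets of `ℝ/ℤ`. -/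
def CbAmb (d : ℕ) := Fin (d - 1) → Set Circle1

/-- The topology on tuples of subsets of the circle generated by the sets
`U(O) = {θ : ∀ i, θ_i ⊆ O_i}` for tuples of open sets `O_i ⊆ ℝ/ℤ`. -/
instance (d : ℕ) : TopologicalSpace (CbAmb d) :=
  TopologicalSpace.generateFrom
    {V | ∃ O : Fin (d - 1) → Set Circle1, (∀ i, IsOpen (O i)) ∧
      V = {θ : CbAmb d | ∀ i, θ i ⊆ O i}}

/-- The combinatorial space `Cb` of critical portraits. -/
def CbSet (d : ℕ) : Set (CbAmb d) :=
  {θ | (∀ i, (θ i).Nonempty) ∧ (∀ i, (θ i).Finite) ∧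
    (∀ i, ∀ x ∈ θ i, ∀ y ∈ θ i, d • x = d • y) ∧
    (∀ i j, θ i = θ j ∨ Disjoint (θ i) (θ j)) ∧
    (⋃ i, θ i).ncard = d + {A : Set Circle1 | ∃ i, A = θ i}.ncard - 1 ∧
    (∀ i j, Disjoint (θ i) (θ j) → UnlinkedIn (θ i) (θ j))}

/-- `α ∈ ℝ/ℤ` is strictly preperiodic under multiplication by `d`: its orbit is finite
(it is preperiodic) but `α` itself is not periodic. -/
def StrictlyPreperiodic (d : ℕ) (α : Circle1) : Prop :=
  (∃ m l : ℕ, 1 ≤ l ∧ (d ^ (m + l)) • α = (d ^ m) • α) ∧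
  ∀ l : ℕ, 1 ≤ l → (d ^ l) • α ≠ α

/-- The set of Misiurewicz-type combinatorics: portraits all of whose angles are strictly
preperiodic under multiplication by `d`. -/
def CbMis (d : ℕ) : Set (CbAmb d) :=
  {θ | θ ∈ CbSet d ∧ ∀ i, ∀ α ∈ θ i, StrictlyPreperiodic d α}

/-! ### Auxiliary lemmas -/

open Metric Set

lemma norm_coe_le' (x : ℝ) : ‖(↑x : Circle1)‖ ≤ |x| := by
  rw [AddCircle.norm_eq]
  simp only [inv_one, one_mul, mul_one]
  simpa using round_le x 0

lemma coe_nsmul' (n : ℕ) (x : ℝ) : (↑(n * x) : Circle1) = n • (↑x : Circle1) := by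
  rw [← AddCircle.coe_nsmul, nsmul_eq_mul]

lemma coe_int_zero (m : ℤ) : ((m : ℝ) : Circle1) = 0 := by
  rw [AddCircle.coe_eq_zero_iff]
  exact ⟨m, by simp⟩

lemma coe_image_ball (x : ℝ) (ε : ℝ) :
    ((fun r : ℝ => (r : Circle1)) '' Metric.ball x ε) = Metric.ball (↑x : Circle1) ε := by
  ext z
  simp only [Set.mem_image, Metric.mem_ball]
  constructor
  · rintro ⟨y, hy, rfl⟩
    have h1 : dist ((y : Circle1)) ((x : Circle1)) = ‖((y - x : ℝ) : Circle1)‖ := by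
      rw [dist_eq_norm, AddCircle.coe_sub]
    rw [h1]
    exact lt_of_le_of_lt (norm_coe_le' _) (by rwa [Real.dist_eq] at hy)
  · intro hz
    induction z using QuotientAddGroup.induction_on with
    | H y =>
    set w := y - x with hw
    have h1 : dist ((y : Circle1)) ((x : Circle1)) = ‖((w : ℝ) : Circle1)‖ := by
      rw [dist_eq_norm, AddCircle.coe_sub]
    rw [show (QuotientAddGroup.mk y : Circle1) = (y : Circle1) from rfl, h1,
      AddCircle.norm_eq] at hz
    simp only [inv_one, one_mul, mul_one] at hz
    refine ⟨y - round w, ?_, ?_⟩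
    · rw [Real.dist_eq, show y - (round w : ℝ) - x = w - round w by rw [hw]; ring]
      exact hz
    · show ((y - (round w : ℝ) : ℝ) : Circle1) = (y : Circle1)
      rw [AddCircle.coe_sub, coe_int_zero, sub_zero]

lemma isPreconnected_ball_circle (z : Circle1) (ε : ℝ) :
    IsPreconnected (Metric.ball z ε) := by
  induction z using QuotientAddGroup.induction_on with
  | H y =>
    rw [show (QuotientAddGroup.mk y : Circle1) = (y : Circle1) from rfl, ← coe_image_ball]
    exact ((convex_ball y ε).isPreconnected).image _
      (AddCircle.continuous_mk' 1).continuousOn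

instance : LocallyConnectedSpace Circle1 := by
  rw [locallyConnectedSpace_iff_connected_subsets]
  intro x U hU
  obtain ⟨ε, hε, hball⟩ := Metric.mem_nhds_iff.mp hU
  exact ⟨Metric.ball x ε, Metric.ball_mem_nhds x hε, isPreconnected_ball_circle x ε, hball⟩

lemma mem_closure_of_basic {d : ℕ} {S : Set (CbAmb d)} {θ : CbAmb d}
    (h : ∀ O : Fin (d-1) → Set Circle1, (∀ i, IsOpen (O i)) → (∀ i, θ i ⊆ O i) →
      ∃ θ' ∈ S, ∀ i, θ' i ⊆ O i) : θ ∈ closure S := by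
  rw [_root_.mem_closure_iff]
  intro U hU hθU
  have hU' : TopologicalSpace.GenerateOpen
      {V | ∃ O : Fin (d - 1) → Set Circle1, (∀ i, IsOpen (O i)) ∧
        V = {θ : CbAmb d | ∀ i, θ i ⊆ O i}} U := hU
  have key : ∀ V : Set (CbAmb d), TopologicalSpace.GenerateOpen
      {V | ∃ O : Fin (d - 1) → Set Circle1, (∀ i, IsOpen (O i)) ∧
        V = {θ : CbAmb d | ∀ i, θ i ⊆ O i}} V → θ ∈ V →
      ∃ O : Fin (d-1) → Set Circle1, (∀ i, IsOpen (O i)) ∧ (∀ i, θ i ⊆ O i) ∧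
        {θ' : CbAmb d | ∀ i, θ' i ⊆ O i} ⊆ V := by
    intro V hV
    induction hV with
    | basic V hVG =>
        intro hm
        obtain ⟨O, hO, rfl⟩ := hVG
        exact ⟨O, hO, hm, subset_rfl⟩
    | univ =>
        exact fun _ => ⟨fun _ => univ, fun _ => isOpen_univ, fun i => subset_univ _,
          subset_univ _⟩
    | inter V W _ _ ihV ihW =>
        rintro ⟨hmV, hmW⟩
        obtain ⟨O, hO1, hO2, hO3⟩ := ihV hmV
        obtain ⟨P, hP1, hP2, hP3⟩ := ihW hmW
        refine ⟨fun i => O i ∩ P i, fun i => (hO1 i).inter (hP1 i),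
          fun i => subset_inter (hO2 i) (hP2 i), fun θ' hθ' => ?_⟩
        exact ⟨hO3 fun i => (hθ' i).trans inter_subset_left,
          hP3 fun i => (hθ' i).trans inter_subset_right⟩
    | sUnion 𝒮 _ ih =>
        rintro ⟨V, hVS, hmV⟩
        obtain ⟨O, hO1, hO2, hO3⟩ := ih V hVS hmV
        exact ⟨O, hO1, hO2, hO3.trans (subset_sUnion_of_mem hVS)⟩
  obtain ⟨O, hO1, hO2, hO3⟩ := key U hU' hθU
  obtain ⟨θ', hθ'S, hθ'O⟩ := h O hO1 hO2
  exact ⟨θ', hO3 hθ'O, hθ'S⟩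

lemma frac_nsmul_zero (d : ℕ) (hd : 0 < d) (q : ℤ) (k : ℕ) :
    (d ^ k) • (↑((q : ℝ) / (d : ℝ) ^ k) : Circle1) = 0 := by
  have hdR : ((d : ℝ)) ^ k ≠ 0 := by positivity
  rw [← coe_nsmul']
  have : ((d ^ k : ℕ) : ℝ) * ((q : ℝ) / (d : ℝ) ^ k) = (q : ℝ) := by
    push_cast; field_simp
  rw [this, AddCircle.coe_eq_zero_iff]
  exact ⟨q, by simp⟩

lemma sp_of_frac (d : ℕ) (hd : 2 ≤ d) (q : ℤ) (k : ℕ) (hk : 1 ≤ k)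
    (hq : ¬ (d : ℤ) ∣ q) : StrictlyPreperiodic d (↑((q : ℝ) / (d : ℝ) ^ k)) := by
  set α : Circle1 := ↑((q : ℝ) / (d : ℝ) ^ k) with hα
  have hd0 : 0 < d := by omega
  have hzero : (d ^ k) • α = 0 := frac_nsmul_zero d hd0 q k
  constructor
  · refine ⟨k, 1, le_refl 1, ?_⟩
    rw [pow_add, pow_one, mul_comm (d^k) d, mul_smul, hzero, smul_zero]
  · intro l hl hper
    have hiter : ∀ n : ℕ, (d ^ (l * n)) • α = α := by
      intro n
      induction n with
      | zero => simp
      | succ n ih =>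
          have : l * (n + 1) = l * n + l := by ring
          rw [this, pow_add, mul_smul, hper, ih]
    have h1 : (d ^ (l * k)) • α = α := hiter k
    have h2 : (d ^ (l * k)) • α = 0 := by
      have hlk : l * k = (l * k - k) + k := by
        have : k ≤ l * k := Nat.le_mul_of_pos_left k hl
        omega
      rw [hlk, pow_add, mul_smul, hzero, smul_zero]
    have hα0 : α = 0 := by rw [← h1, h2]
    rw [hα, AddCircle.coe_eq_zero_iff] at hα0
    obtain ⟨m, hm⟩ := hα0
    have hdR : ((d : ℝ)) ^ k ≠ 0 := by positivity
    have : (q : ℝ) = (m : ℝ) * (d : ℝ) ^ k := by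
      field_simp at hm
      simp only [zsmul_eq_mul, mul_one] at hm
      linarith [hm]
    have hq' : q = m * (d : ℤ) ^ k := by exact_mod_cast this
    exact hq ⟨m * (d : ℤ) ^ (k - 1), by
      rw [hq']
      have : (d : ℤ) ^ k = (d : ℤ) * (d : ℤ) ^ (k - 1) := by
        rw [← pow_succ']
        congr 1
        omega
      rw [this]; ring⟩

lemma order_d_decomp (d : ℕ) (hd : 0 < d) (r : Circle1) (hr : d • r = 0) :
    ∃ i : ℤ, r = ↑((i : ℝ) / (d : ℝ)) := by
  induction r using QuotientAddGroup.induction_on with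
  | H y =>
    have hy : (d • (y : Circle1)) = ((d * y : ℝ) : Circle1) := (coe_nsmul' d y).symm
    rw [show (QuotientAddGroup.mk y : Circle1) = (y : Circle1) from rfl] at hr ⊢
    rw [hy] at hr
    rw [AddCircle.coe_eq_zero_iff] at hr
    obtain ⟨m, hm⟩ := hr
    refine ⟨m, ?_⟩
    congr 1
    have hdR : (d : ℝ) ≠ 0 := by positivity
    field_simp
    simp only [zsmul_eq_mul, mul_one] at hm
    linarith [hm]

lemma sp_add (d : ℕ) (hd : 2 ≤ d) (j : ℤ) (k : ℕ) (hk : 2 ≤ k) (r : Circle1)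
    (hr : d • r = 0) :
    StrictlyPreperiodic d (↑(((j * d + 1 : ℤ) : ℝ) / (d : ℝ) ^ k) + r) := by
  obtain ⟨i, rfl⟩ := order_d_decomp d (by omega) r hr
  have hdR : (d : ℝ) ≠ 0 := by
    have : (0:ℝ) < d := by exact_mod_cast (by omega : 0 < d)
    positivity
  have key : (↑(((j * d + 1 : ℤ) : ℝ) / (d : ℝ) ^ k) + (↑((i : ℝ) / (d : ℝ)) : Circle1)) =
      ↑((((j * d + 1 + i * d ^ (k - 1) : ℤ)) : ℝ) / (d : ℝ) ^ k) := by
    rw [← AddCircle.coe_add]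
    congr 1
    have hpow : (d : ℝ) ^ k = (d : ℝ) * (d : ℝ) ^ (k - 1) := by
      rw [← pow_succ']; congr 1; omega
    push_cast
    rw [hpow]
    field_simp
  rw [key]
  apply sp_of_frac d hd _ k (by omega)
  intro hdvd
  have h1 : (d : ℤ) ∣ j * d + i * d ^ (k - 1) := by
    refine Dvd.dvd.add (dvd_mul_left (d:ℤ) j) ?_
    exact Dvd.dvd.mul_left (dvd_pow_self (d:ℤ) (by omega)) i
  have h2 : (d : ℤ) ∣ 1 := by
    have := dvd_sub hdvd h1
    simpa [show j * d + 1 + i * d ^ (k-1) - (j * d + i * d ^ (k-1)) = 1 by ring] using this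
  have := Int.le_of_dvd one_pos h2
  omega

lemma dense_good_frac (d : ℕ) (hd : 2 ≤ d) (z : Circle1) {ε : ℝ} (hε : 0 < ε) :
    ∃ (j : ℤ) (k : ℕ), 2 ≤ k ∧
      dist (↑(((j * d + 1 : ℤ) : ℝ) / (d : ℝ) ^ k) : Circle1) z < ε := by
  induction z using QuotientAddGroup.induction_on with
  | H y =>
  have hd1 : (1 : ℝ) < d := by exact_mod_cast (by omega : 1 < d)
  obtain ⟨n, hn⟩ := pow_unbounded_of_one_lt ((d : ℝ) / ε) hd1
  set k := max n 2 with hk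
  have hk2 : 2 ≤ k := le_max_right _ _
  have hdk : (d : ℝ) / ε < (d : ℝ) ^ k :=
    lt_of_lt_of_le hn (pow_le_pow_right₀ (by linarith) (le_max_left _ _))
  have hdkpos : (0 : ℝ) < (d : ℝ) ^ k := by positivity
  have hdpos : (0 : ℝ) < (d : ℝ) := by linarith
  set j : ℤ := ⌊(y * (d : ℝ) ^ k - 1) / d⌋ with hj
  refine ⟨j, k, hk2, ?_⟩
  have h1 : (j : ℝ) ≤ (y * (d : ℝ) ^ k - 1) / d := Int.floor_le _
  have h2 : (y * (d : ℝ) ^ k - 1) / d < j + 1 := Int.lt_floor_add_one _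
  have hA : (j : ℝ) * d ≤ y * (d : ℝ) ^ k - 1 := (le_div_iff₀ hdpos).mp h1
  have hB : y * (d : ℝ) ^ k - 1 < ((j : ℝ) + 1) * d := (div_lt_iff₀ hdpos).mp h2
  have hrw : ((j * d + 1 : ℤ) : ℝ) / (d : ℝ) ^ k - y
      = (((j : ℝ) * d + 1) - y * (d : ℝ) ^ k) / (d : ℝ) ^ k := by
    push_cast
    field_simp
  have key : |((j * d + 1 : ℤ) : ℝ) / (d : ℝ) ^ k - y| ≤ (d : ℝ) / (d : ℝ) ^ k := by
    rw [hrw, abs_div, abs_of_pos hdkpos, div_le_div_iff_of_pos_right hdkpos, abs_le]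
    constructor <;> nlinarith
  have hlt : (d : ℝ) / (d : ℝ) ^ k < ε := by
    rw [div_lt_iff₀ hdkpos]
    rw [div_lt_iff₀ hε] at hdk
    linarith
  have hfin : dist (↑(((j * d + 1 : ℤ) : ℝ) / (d : ℝ) ^ k) : Circle1) ↑y
      ≤ |((j * d + 1 : ℤ) : ℝ) / (d : ℝ) ^ k - y| := by
    rw [dist_eq_norm, ← AddCircle.coe_sub]
    exact norm_coe_le' _
  exact lt_of_le_of_lt (hfin.trans key) hlt

lemma unlinkedIn_translate {A B : Set Circle1} (t : Circle1) (h : UnlinkedIn A B) :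
    UnlinkedIn ((· + t) '' A) ((· + t) '' B) := by
  obtain ⟨x, hxB, hB⟩ := h
  let e : Circle1 ≃ₜ Circle1 := Homeomorph.addRight t
  have hxAc : x ∈ Aᶜ := (connectedComponentIn_subset _ _) (hB hxB)
  have himg := e.image_connectedComponentIn (s := Aᶜ) hxAc
  have hcompl : e '' Aᶜ = ((· + t) '' A)ᶜ := by
    rw [Set.image_compl_eq e.bijective]
    rfl
  refine ⟨x + t, Set.mem_image_of_mem _ hxB, ?_⟩
  rintro z ⟨b, hb, rfl⟩
  have hmem : e b ∈ e '' (connectedComponentIn Aᶜ x) := Set.mem_image_of_mem _ (hB hb)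
  rw [himg, hcompl] at hmem
  exact hmem

lemma unlinked_stab {A B : Set Circle1} (hA : A.Finite) (hB : B.Finite)
    (h : UnlinkedIn A B) :
    ∃ ε > 0, ∀ u : Circle1, ‖u‖ < ε → UnlinkedIn A ((· + u) '' B) := by
  obtain ⟨x, hxB, hBC⟩ := h
  have hAc : IsOpen Aᶜ := hA.isClosed.isOpen_compl
  have hCopen : IsOpen (connectedComponentIn Aᶜ x) := hAc.connectedComponentIn
  obtain ⟨ε, hε, hth⟩ := hB.isCompact.exists_thickening_subset_open hCopen hBC
  refine ⟨ε, hε, fun u hu => ?_⟩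
  have hmem : ∀ b ∈ B, b + u ∈ connectedComponentIn Aᶜ x := by
    intro b hb
    apply hth
    rw [Metric.mem_thickening_iff]
    refine ⟨b, hb, ?_⟩
    rw [dist_eq_norm, add_sub_cancel_left]
    exact hu
  refine ⟨x + u, Set.mem_image_of_mem _ hxB, ?_⟩
  have hxu : x + u ∈ connectedComponentIn Aᶜ x := hmem x hxB
  rw [← connectedComponentIn_eq hxu]
  rintro z ⟨b, hb, rfl⟩
  exact hmem b hb

lemma exists_min_dist {s : Set Circle1} (hs : s.Finite) :
    ∃ δ > 0, ∀ a ∈ s, ∀ b ∈ s, a ≠ b → δ ≤ dist a b := by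
  set P : Set (Circle1 × Circle1) := (s ×ˢ s) ∩ {p | p.1 ≠ p.2} with hP
  have hPfin : P.Finite := (hs.prod hs).inter_of_left _
  rcases P.eq_empty_or_nonempty with hPe | hPne
  · refine ⟨1, one_pos, fun a ha b hb hab => ?_⟩
    exact absurd (show (a, b) ∈ P from ⟨⟨ha, hb⟩, hab⟩) (by rw [hPe]; simp)
  · obtain ⟨p₀, hp₀, hmin⟩ := Set.exists_min_image P (fun p => dist p.1 p.2) hPfin hPne
    exact ⟨dist p₀.1 p₀.2, dist_pos.mpr hp₀.2, fun a ha b hb hab =>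
      hmin (a, b) ⟨⟨ha, hb⟩, hab⟩⟩

/-- Misiurewicz combinatorics are dense in `Cb`. -/
theorem CbMis_dense (d : ℕ) (hd : 2 ≤ d) : CbSet d ⊆ closure (CbMis d) := by
  classical
  intro θ hθ
  obtain ⟨hne, hfin, hsm, heqd, hcard, hunl⟩ := hθ
  apply mem_closure_of_basic
  intro O hO hθO
  have hsfin : (⋃ i, θ i).Finite := Set.finite_iUnion hfin
  obtain ⟨δ, hδ, hδmin⟩ := exists_min_dist hsfin
  -- radii for the open sets
  have hOc : ∀ i, ∃ e > 0, Metric.thickening e (θ i) ⊆ O i := fun i =>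
    (hfin i).isCompact.exists_thickening_subset_open (hO i) (hθO i)
  choose εO hεO hεOsub using hOc
  -- radii for unlinkedness stability
  have hUc : ∀ p : Fin (d-1) × Fin (d-1), ∃ e > 0, ∀ u : Circle1, ‖u‖ < e →
      Disjoint (θ p.1) (θ p.2) → UnlinkedIn (θ p.1) ((· + u) '' (θ p.2)) := by
    intro p
    by_cases hdis : Disjoint (θ p.1) (θ p.2)
    · obtain ⟨e, he, hst⟩ := unlinked_stab (hfin p.1) (hfin p.2) (hunl p.1 p.2 hdis)
      exact ⟨e, he, fun u hu _ => hst u hu⟩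
    · exact ⟨1, one_pos, fun u _ h => absurd h hdis⟩
  choose εU hεU hεUst using hUc
  haveI hι : Nonempty (Fin (d-1)) := ⟨⟨0, by omega⟩⟩
  set ε : ℝ := min (δ/2) (min (Finset.univ.inf' Finset.univ_nonempty εO)
      (Finset.univ.inf' Finset.univ_nonempty (fun p => εU p / 2))) with hεdef
  have hε : 0 < ε := by
    refine lt_min (by linarith) (lt_min ?_ ?_) <;> rw [Finset.lt_inf'_iff]
    · exact fun i _ => hεO i
    · exact fun p _ => half_pos (hεU p)
  have hεδ : ε ≤ δ / 2 := min_le_left _ _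
  have hεO' : ∀ i, ε ≤ εO i := fun i =>
    le_trans (min_le_right _ _) (le_trans (min_le_left _ _)
      (Finset.inf'_le _ (Finset.mem_univ i)))
  have hεU' : ∀ p, ε ≤ εU p / 2 := fun p =>
    le_trans (min_le_right _ _) (le_trans (min_le_right _ _)
      (Finset.inf'_le _ (Finset.mem_univ p)))
  -- choose translations per set value
  have hsel : ∀ A : Set Circle1, ∃ t : Circle1,
      (A.Nonempty ∧ ∀ x ∈ A, ∀ y ∈ A, d • x = d • y) →
      ‖t‖ < ε ∧ ∀ a ∈ A, StrictlyPreperiodic d (a + t) := by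
    intro A
    by_cases h : A.Nonempty ∧ ∀ x ∈ A, ∀ y ∈ A, d • x = d • y
    · obtain ⟨⟨a, ha⟩, hco⟩ := h
      obtain ⟨j, k, hk, hdist⟩ := dense_good_frac d hd a hε
      refine ⟨(↑(((j * d + 1 : ℤ) : ℝ) / (d : ℝ) ^ k) : Circle1) - a, fun _ => ⟨?_, ?_⟩⟩
      · rwa [dist_eq_norm] at hdist
      · intro b hb
        have hβ : b + ((↑(((j * d + 1 : ℤ) : ℝ) / (d : ℝ) ^ k) : Circle1) - a)
            = (↑(((j * d + 1 : ℤ) : ℝ) / (d : ℝ) ^ k) : Circle1) + (b - a) := by abel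
        rw [hβ]
        apply sp_add d hd j k hk
        rw [smul_sub, hco b hb a ha, sub_self]
    · exact ⟨0, fun hc => absurd hc h⟩
  choose τ hτ using hsel
  set t : Fin (d-1) → Circle1 := fun i => τ (θ i) with htdef
  have ht : ∀ i, ‖t i‖ < ε ∧ ∀ a ∈ θ i, StrictlyPreperiodic d (a + t i) :=
    fun i => hτ (θ i) ⟨hne i, hsm i⟩
  set θ' : CbAmb d := (fun i => (· + t i) '' (θ i) : CbAmb d) with hθ'def
  have hteq : ∀ i j, θ i = θ j → t i = t j := by
    intro i j h
    simp only [htdef, h]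
  have hθ'eq : ∀ i j, θ i = θ j → θ' i = θ' j := by
    intro i j h
    simp only [hθ'def]
    rw [hteq i j h, h]
  have hnorm2 : ∀ i j, ‖t j - t i‖ < 2 * ε := by
    intro i j
    have h1 := (ht i).1
    have h2 := (ht j).1
    calc ‖t j - t i‖ ≤ ‖t j‖ + ‖t i‖ := norm_sub_le _ _
    _ < 2 * ε := by linarith
  -- disjointness is preserved
  have hdisj : ∀ i j, Disjoint (θ i) (θ j) → Disjoint (θ' i) (θ' j) := by
    intro i j hd'
    rw [Set.disjoint_left]
    rintro z ⟨a, ha, rfl⟩ ⟨b, hb, hz⟩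
    have hab : a ≠ b := by
      rintro rfl
      exact (Set.disjoint_left.mp hd' ha) hb
    have hdist1 : dist a (a + t i) = ‖t i‖ := by
      rw [dist_eq_norm]
      simp
    have hdist2 : dist (b + t j) b = ‖t j‖ := by
      rw [dist_eq_norm, add_sub_cancel_left]
    have h1 : dist a b ≤ dist a (a + t i) + dist (a + t i) (b + t j) + dist (b + t j) b :=
      dist_triangle4 a (a + t i) (b + t j) b
    have hz' : b + t j = a + t i := hz
    rw [hdist1, hdist2, ← hz', dist_self] at h1
    have h2 : δ ≤ dist a b :=
      hδmin a (Set.mem_iUnion.mpr ⟨i, ha⟩) b (Set.mem_iUnion.mpr ⟨j, hb⟩) hab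
    have h3 := (ht i).1
    have h4 := (ht j).1
    linarith
  -- the pointwise perturbation map
  set f : Circle1 → Circle1 := fun x => if h : ∃ i, x ∈ θ i then x + t h.choose else x
    with hfdef
  have hfval : ∀ i, ∀ a ∈ θ i, f a = a + t i := by
    intro i a ha
    have hex : ∃ i', a ∈ θ i' := ⟨i, ha⟩
    have h0 : a ∈ θ hex.choose := hex.choose_spec
    have hchoose : θ hex.choose = θ i := by
      rcases heqd hex.choose i with h | h
      · exact h
      · exact absurd ha (Set.disjoint_left.mp h h0)
    simp only [hfdef, dif_pos hex]
    rw [hteq _ _ hchoose]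
  have himg : ∀ i, f '' (θ i) = θ' i := fun i => Set.image_congr (hfval i)
  -- injectivity of f on the union
  have hinj : Set.InjOn f (⋃ i, θ i) := by
    intro x hx y hy hxy
    obtain ⟨i, hxi⟩ := Set.mem_iUnion.mp hx
    obtain ⟨j, hyj⟩ := Set.mem_iUnion.mp hy
    rw [hfval i x hxi, hfval j y hyj] at hxy
    rcases heqd i j with h | h
    · rw [hteq i j h] at hxy
      exact add_right_cancel hxy
    · exfalso
      have hd2 := hdisj i j h
      have hx' : x + t i ∈ θ' i := Set.mem_image_of_mem _ hxi
      have hy' : y + t j ∈ θ' j := Set.mem_image_of_mem _ hyj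
      rw [hxy] at hx'
      exact Set.disjoint_left.mp hd2 hx' hy'
  -- cardinality of the union
  have hiU : (⋃ i, θ' i) = f '' (⋃ i, θ i) := by
    refine Eq.trans ?_ Set.image_iUnion.symm
    exact (Set.iUnion_congr himg).symm
  have hcard1 : (⋃ i, θ' i).ncard = (⋃ i, θ i).ncard := by
    rw [hiU, Set.ncard_image_of_injOn hinj]
  -- cardinality of the collection of sets
  have hcoll : {A : Set Circle1 | ∃ i, A = θ' i} =
      (Set.image f) '' {A : Set Circle1 | ∃ i, A = θ i} := by
    ext A
    simp only [Set.mem_setOf_eq, Set.mem_image]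
    constructor
    · rintro ⟨i, rfl⟩
      exact ⟨θ i, ⟨i, rfl⟩, himg i⟩
    · rintro ⟨B, ⟨i, rfl⟩, rfl⟩
      exact ⟨i, himg i⟩
  have hGinj : Set.InjOn (Set.image f) {A : Set Circle1 | ∃ i, A = θ i} := by
    rintro A ⟨i, rfl⟩ B ⟨j, rfl⟩ hAB
    rcases heqd i j with h | h
    · exact h
    · exfalso
      have h1 : θ' i = θ' j := by rw [← himg i, ← himg j, hAB]
      have h2 := hdisj i j h
      rw [h1] at h2
      obtain ⟨z, hz⟩ := (hne j).image (· + t j)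
      exact Set.disjoint_left.mp h2 hz hz
  have hcard2 : {A : Set Circle1 | ∃ i, A = θ' i}.ncard =
      {A : Set Circle1 | ∃ i, A = θ i}.ncard := by
    rw [hcoll, Set.ncard_image_of_injOn hGinj]
  -- unlinkedness for θ'
  have hunl' : ∀ i j, Disjoint (θ' i) (θ' j) → UnlinkedIn (θ' i) (θ' j) := by
    intro i j hd'
    rcases heqd i j with h | h
    · exfalso
      rw [hθ'eq i j h] at hd'
      obtain ⟨z, hz⟩ := (hne j).image (· + t j)
      exact Set.disjoint_left.mp hd' hz hz
    · have hu : ‖t j - t i‖ < εU (i, j) := by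
        have := hεU' (i, j)
        have := hnorm2 i j
        linarith [hεU' (i,j), hnorm2 i j]
      have h1 : UnlinkedIn (θ i) ((· + (t j - t i)) '' (θ j)) := hεUst (i, j) _ hu h
      have h2 := unlinkedIn_translate (t i) h1
      have h3 : ((· + t i) '' ((· + (t j - t i)) '' (θ j))) = θ' j := by
        rw [Set.image_image]
        apply Set.image_congr
        intro b _
        abel
      rw [h3] at h2
      exact h2
  -- subset of the open sets
  have hsub : ∀ i, θ' i ⊆ O i := by
    intro i
    rintro z ⟨a, ha, rfl⟩
    apply hεOsub i
    rw [Metric.mem_thickening_iff]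
    refine ⟨a, ha, ?_⟩
    rw [dist_eq_norm, add_sub_cancel_left]
    exact lt_of_lt_of_le (ht i).1 (hεO' i)
  -- conclude
  refine ⟨θ', ⟨⟨fun i => (hne i).image _, fun i => (hfin i).image _, ?_, ?_, ?_, hunl'⟩,
    ?_⟩, hsub⟩
  · rintro i x ⟨a, ha, rfl⟩ y ⟨b, hb, rfl⟩
    rw [smul_add, smul_add, hsm i a ha b hb]
  · intro i j
    rcases heqd i j with h | h
    · exact Or.inl (hθ'eq i j h)
    · exact Or.inr (hdisj i j h)
  · rw [hcard1, hcard2]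
    exact hcard
  · rintro i α ⟨a, ha, rfl⟩
    exact (ht i).2 a ha
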